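/- The tropical addition ℂ × ℂ ⊸ ℂ, (a,b) ↦ a⊞b, is upper semi-continuous but not lower semi-continuous: for every (a,b) ∈ ℂ² and every open set W ⊆ ℂ containing a⊞b there is a neighborhood U of (a,b) in ℂ² such that x⊞y ⊆ W for all (x,y) ∈ U; but there exists an open set V ⊆ ℂ such that {(a,b) : (a⊞b) ∩ V ≠ ∅} is not open in ℂ². -/

import Mathlib

open Classical in
/-- The shortest arc connecting `a` and `b` on the circle `{z : |z| = |a|}`
(for `|a| = |b|`, `a + b ≠ 0`): the points of the circle lying on the cone
of nonnegative combinations of `a` and `b`. -/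
noncomputable def arc (a b : ℂ) : Set ℂ :=
  {c | ‖c‖ = ‖a‖ ∧
    ∃ l m : ℝ, 0 ≤ l ∧ 0 ≤ m ∧ c = (l : ℂ) * a + (m : ℂ) * b}

open Classical in
/-- The tropical sum of two complex numbers. -/
noncomputable def tropAdd (a b : ℂ) : Set ℂ :=
  if ‖b‖ < ‖a‖ then {a}
  else if ‖a‖ < ‖b‖ then {b}
  else if a + b = 0 then {c | ‖c‖ ≤ ‖a‖}
  else arc a b

/-- Elementwise extension of the tropical addition to subsets. -/
def setTrop (A B : Set ℂ) : Set ℂ :=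
  ⋃ a ∈ A, ⋃ b ∈ B, tropAdd a b

noncomputable def vmap (q : (ℂ × ℂ) × ℝ) : ℂ :=
  (q.2 : ℂ) * q.1.1 + ((1 - q.2 : ℝ) : ℂ) * q.1.2

noncomputable def Gmap (q : (ℂ × ℂ) × ℝ) : ℂ :=
  ((max (‖q.1.1‖) (‖q.1.2‖) : ℝ) : ℂ) * vmap q
    / ((‖(vmap q)‖ : ℝ) : ℂ)


lemma vmap_pair (x y : ℂ) (t : ℝ) :
    vmap ((x, y), t) = (t : ℂ) * x + ((1 - t : ℝ) : ℂ) * y := rfl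

lemma tropAdd_subset_of_param (x y : ℂ) (W : Set ℂ)
    (h : ∀ t ∈ Set.Icc (0:ℝ) 1, vmap ((x, y), t) ≠ 0 ∧ Gmap ((x, y), t) ∈ W) :
    tropAdd x y ⊆ W := by
  have h1 := h 1 ⟨zero_le_one, le_refl 1⟩
  have h0 := h 0 ⟨le_refl 0, zero_le_one⟩
  have hx : x ≠ 0 := by
    intro hx0
    apply h1.1
    rw [vmap_pair, hx0]; norm_num
  have hy : y ≠ 0 := by
    intro hy0
    apply h0.1
    rw [vmap_pair, hy0]; norm_num
  have habsx : ‖x‖ ≠ 0 := by simpa using hx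
  have habsy : ‖y‖ ≠ 0 := by simpa using hy
  have hv1 : vmap ((x, y), (1:ℝ)) = x := by rw [vmap_pair]; norm_num
  have hv0 : vmap ((x, y), (0:ℝ)) = y := by rw [vmap_pair]; norm_num
  unfold tropAdd
  split_ifs with hba hab hsum
  · intro c hc
    rw [Set.mem_singleton_iff] at hc
    have hG : Gmap ((x, y), (1:ℝ)) = x := by
      unfold Gmap
      rw [hv1]
      show ((max (‖x‖) (‖y‖) : ℝ) : ℂ) * x / _ = x
      rw [max_eq_left hba.le, mul_comm, mul_div_assoc, div_self (by
        simpa [Complex.ofReal_ne_zero] using habsx), mul_one]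
    rw [hc, ← hG]; exact h1.2
  · intro c hc
    rw [Set.mem_singleton_iff] at hc
    have hG : Gmap ((x, y), (0:ℝ)) = y := by
      unfold Gmap
      rw [hv0]
      show ((max (‖x‖) (‖y‖) : ℝ) : ℂ) * y / _ = y
      rw [max_eq_right hab.le, mul_comm, mul_div_assoc, div_self (by
        simpa [Complex.ofReal_ne_zero] using habsy), mul_one]
    rw [hc, ← hG]; exact h0.2
  · exfalso
    apply (h (1/2) ⟨by norm_num, by norm_num⟩).1
    rw [vmap_pair]
    push_cast
    rw [show ((1:ℂ)/2) * x + (1 - 1/2) * y = (1/2 : ℂ) * (x + y) by ring, hsum, mul_zero]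
  · rintro c ⟨hcabs, l, m, hl, hm, hc⟩
    have hxy : ‖x‖ = ‖y‖ := le_antisymm (not_lt.mp hba) (not_lt.mp hab)
    set s := l + m with hs
    have hc0 : c ≠ 0 := by
      intro h0; rw [h0] at hcabs; exact habsx (by simpa using hcabs.symm)
    have hspos : 0 < s := by
      rcases lt_or_eq_of_le (add_nonneg hl hm) with h' | h'
      · exact h'
      · exfalso
        have hl0 : l = 0 := by linarith
        have hm0 : m = 0 := by linarith
        apply hc0; rw [hc, hl0, hm0]; simp
    have ht : l / s ∈ Set.Icc (0:ℝ) 1 :=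
      ⟨div_nonneg hl hspos.le, by rw [div_le_one hspos]; linarith⟩
    have hveq : vmap ((x, y), l / s) = ((s⁻¹ : ℝ) : ℂ) * c := by
      rw [vmap_pair, hc]
      have h1t : (1 : ℝ) - l / s = m / s := by field_simp; linarith
      rw [h1t]
      push_cast
      field_simp
    have hvabs : ‖(vmap ((x, y), l / s))‖ = s⁻¹ * ‖x‖ := by
      rw [hveq, norm_mul, Complex.norm_real, Real.norm_eq_abs, abs_of_pos (inv_pos.mpr hspos), hcabs]
    have hG : Gmap ((x, y), l / s) = c := by
      unfold Gmap
      rw [hvabs, hveq]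
      show ((max (‖x‖) (‖y‖) : ℝ) : ℂ) * _ / _ = c
      rw [hxy, max_self, ← hxy]
      have hs0 : (s : ℝ) ≠ 0 := hspos.ne'
      rw [div_eq_iff (Complex.ofReal_ne_zero.mpr (mul_ne_zero (inv_ne_zero hs0) habsx))]
      push_cast
      ring
    rw [← hG]
    exact (h (l / s) ht).2

lemma vmap_ne_of (a b : ℂ) (hab : ‖a‖ = ‖b‖) (hsum : a + b ≠ 0)
    (t : ℝ) (ht : t ∈ Set.Icc (0:ℝ) 1) : vmap ((a, b), t) ≠ 0 := by
  have ha : a ≠ 0 := by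
    intro h0
    apply hsum
    have : ‖b‖ = 0 := by rw [← hab, h0]; simp
    rw [h0, norm_eq_zero.mp this]; simp
  have habsa : ‖a‖ ≠ 0 := by simpa using ha
  rw [vmap_pair]
  intro hv
  have heq : (t : ℂ) * a = -(((1 - t : ℝ) : ℂ) * b) := by linear_combination hv
  have habs2 : t * ‖a‖ = (1 - t) * ‖b‖ := by
    have := congrArg (‖·‖) heq
    rw [norm_neg, norm_mul, norm_mul, Complex.norm_real, Real.norm_eq_abs, Complex.norm_real, Real.norm_eq_abs,
      abs_of_nonneg ht.1, abs_of_nonneg (by linarith [ht.2] : (0:ℝ) ≤ 1 - t)] at this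
    exact this
  rw [← hab] at habs2
  have htt : t = 1/2 := by
    have := mul_right_cancel₀ habsa habs2
    linarith
  apply hsum
  rw [htt] at hv
  push_cast at hv
  norm_num at hv
  linear_combination 2 * hv

lemma G_mem_arc (a b : ℂ) (hab : ‖a‖ = ‖b‖)
    (t : ℝ) (ht : t ∈ Set.Icc (0:ℝ) 1) (hv : vmap ((a, b), t) ≠ 0) :
    Gmap ((a, b), t) ∈ arc a b := by
  have hvabs : ‖(vmap ((a, b), t))‖ ≠ 0 := by simpa using hv
  have hvpos : 0 < ‖(vmap ((a, b), t))‖ :=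
    lt_of_le_of_ne (norm_nonneg _) (Ne.symm hvabs)
  constructor
  · unfold Gmap
    rw [norm_div, norm_mul, Complex.norm_real, Real.norm_eq_abs, Complex.norm_real, Real.norm_eq_abs,
      abs_of_nonneg (le_max_of_le_left (norm_nonneg a)),
      abs_of_nonneg (norm_nonneg _)]
    show max (‖a‖) (‖b‖) * _ / _ = _
    rw [hab, max_self, ← hab]
    field_simp
  · refine ⟨‖a‖ * t / ‖(vmap ((a, b), t))‖,
      ‖a‖ * (1 - t) / ‖(vmap ((a, b), t))‖, ?_, ?_, ?_⟩
    · exact div_nonneg (mul_nonneg (norm_nonneg a) ht.1) hvpos.le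
    · exact div_nonneg (mul_nonneg (norm_nonneg a) (by linarith [ht.2])) hvpos.le
    · unfold Gmap
      show ((max (‖a‖) (‖b‖) : ℝ) : ℂ) * _ / _ = _
      rw [hab, max_self, ← hab]
      rw [vmap_pair] at hvabs ⊢
      push_cast
      field_simp

lemma vmap_cont : Continuous vmap := by
  unfold vmap; fun_prop

lemma Gmap_contOn : ContinuousOn Gmap {q | vmap q ≠ 0} := by
  have habs : Continuous (fun z : ℂ => ‖z‖) := continuous_norm
  unfold Gmap
  apply ContinuousOn.div
  · apply Continuous.continuousOn
    apply Continuous.mul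
    · exact Complex.continuous_ofReal.comp
        ((habs.comp (continuous_fst.comp continuous_fst)).max
          (habs.comp (continuous_snd.comp continuous_fst)))
    · exact vmap_cont
  · exact (Complex.continuous_ofReal.comp (habs.comp vmap_cont)).continuousOn
  · intro q hq
    simpa using hq

lemma tropAdd_abs_le (x y : ℂ) :
    ∀ c ∈ tropAdd x y, ‖c‖ ≤ max (‖x‖) (‖y‖) := by
  unfold tropAdd
  split_ifs with hba hab hsum <;> intro c hc
  · rw [Set.mem_singleton_iff] at hc; rw [hc]; exact le_max_left _ _
  · rw [Set.mem_singleton_iff] at hc; rw [hc]; exact le_max_right _ _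
  · exact le_trans hc (le_max_left _ _)
  · rw [hc.1]; exact le_max_left _ _


/-- the tropical addition `(a,b) ↦ a⊞b` of complex numbers is
upper semi-continuous but not lower semi-continuous. -/
theorem tropAdd_usc_not_lsc :
    (∀ a b : ℂ, ∀ W : Set ℂ, IsOpen W → tropAdd a b ⊆ W →
      ∃ U : Set (ℂ × ℂ), IsOpen U ∧ (a, b) ∈ U ∧
        ∀ p ∈ U, tropAdd p.1 p.2 ⊆ W) ∧
    ∃ V : Set ℂ, IsOpen V ∧
      ¬ IsOpen {p : ℂ × ℂ | (tropAdd p.1 p.2 ∩ V).Nonempty} := by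
  constructor
  · intro a b W hW hsub
    by_cases hba : ‖b‖ < ‖a‖
    · refine ⟨{p : ℂ × ℂ | p.1 ∈ W ∧ ‖p.2‖ < ‖p.1‖}, ?_, ?_, ?_⟩
      · exact (hW.preimage continuous_fst).inter
          (isOpen_lt (continuous_norm.comp continuous_snd)
            (continuous_norm.comp continuous_fst))
      · refine ⟨hsub ?_, hba⟩
        unfold tropAdd; rw [if_pos hba]; rfl
      · rintro p ⟨hp1, hp2⟩
        intro c hc
        unfold tropAdd at hc; rw [if_pos hp2] at hc
        rw [Set.mem_singleton_iff] at hc; rw [hc]; exact hp1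
    · by_cases hab : ‖a‖ < ‖b‖
      · refine ⟨{p : ℂ × ℂ | p.2 ∈ W ∧ ‖p.1‖ < ‖p.2‖}, ?_, ?_, ?_⟩
        · exact (hW.preimage continuous_snd).inter
            (isOpen_lt (continuous_norm.comp continuous_fst)
              (continuous_norm.comp continuous_snd))
        · refine ⟨hsub ?_, hab⟩
          unfold tropAdd; rw [if_neg hba, if_pos hab]; rfl
        · rintro p ⟨hp1, hp2⟩
          intro c hc
          unfold tropAdd at hc
          rw [if_neg (not_lt.mpr hp2.le), if_pos hp2] at hc
          rw [Set.mem_singleton_iff] at hc; rw [hc]; exact hp1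
      · have hxy : ‖a‖ = ‖b‖ :=
          le_antisymm (not_lt.mp hba) (not_lt.mp hab)
        by_cases hsum : a + b = 0
        · -- disk case
          set r := ‖a‖ with hr
          have hball : Metric.closedBall (0:ℂ) r ⊆ W := by
            intro c hc
            apply hsub
            unfold tropAdd
            rw [if_neg hba, if_neg hab, if_pos hsum]
            rw [Metric.mem_closedBall, dist_zero_right] at hc
            exact hc
          obtain ⟨δ, hδ, hthick⟩ :=
            (isCompact_closedBall (0:ℂ) r).exists_thickening_subset_open hW hball
          have hthick' : Metric.ball (0:ℂ) (δ + r) ⊆ W := by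
            rw [← thickening_closedBall hδ (norm_nonneg a) (0:ℂ)]
            exact hthick
          refine ⟨{p : ℂ × ℂ | ‖p.1‖ < r + δ ∧ ‖p.2‖ < r + δ},
            ?_, ⟨by simp [← hr, hδ], by rw [← hxy]; simp [← hr, hδ]⟩, ?_⟩
          · exact (isOpen_lt (continuous_norm.comp continuous_fst)
              continuous_const).inter
              (isOpen_lt (continuous_norm.comp continuous_snd) continuous_const)
          · rintro p ⟨hp1, hp2⟩ c hc
            apply hthick'
            rw [Metric.mem_ball, dist_zero_right]
            calc ‖c‖ ≤ max (‖p.1‖) (‖p.2‖) :=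
                  tropAdd_abs_le p.1 p.2 c hc
              _ < r + δ := max_lt hp1 hp2
              _ = δ + r := by ring
        · -- arc case: tube lemma
          have hΩ : IsOpen ({q | vmap q ≠ 0} ∩ Gmap ⁻¹' W) := by
            apply Gmap_contOn.isOpen_inter_preimage _ hW
            exact isOpen_compl_iff.mpr (isClosed_eq vmap_cont continuous_const)
          have harc : tropAdd a b = arc a b := by
            unfold tropAdd; rw [if_neg hba, if_neg hab, if_neg hsum]
          have hsub2 : ({((a : ℂ), (b : ℂ))} : Set (ℂ × ℂ)) ×ˢ Set.Icc (0:ℝ) 1 ⊆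
              {q | vmap q ≠ 0} ∩ Gmap ⁻¹' W := by
            rintro ⟨p, t⟩ ⟨hp, ht⟩
            rw [Set.mem_singleton_iff] at hp
            subst hp
            refine ⟨vmap_ne_of a b hxy hsum t ht, ?_⟩
            exact hsub (harc ▸ G_mem_arc a b hxy t ht (vmap_ne_of a b hxy hsum t ht))
          obtain ⟨u, v, hu, hv, hau, hIv, huv⟩ :=
            generalized_tube_lemma isCompact_singleton isCompact_Icc hΩ hsub2
          refine ⟨u, hu, hau rfl, ?_⟩
          intro p hp
          apply tropAdd_subset_of_param
          intro t ht
          have := huv (Set.mk_mem_prod hp (hIv ht))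
          simpa using this
  · -- not lsc
    refine ⟨Metric.ball 1 (1/2), Metric.isOpen_ball, ?_⟩
    intro hopen
    have hmem : ((Complex.I, -Complex.I) : ℂ × ℂ) ∈
        {p : ℂ × ℂ | (tropAdd p.1 p.2 ∩ Metric.ball 1 (1/2)).Nonempty} := by
      refine ⟨1, ?_, ?_⟩
      · unfold tropAdd
        rw [if_neg (by simp), if_neg (by simp), if_pos (by simp)]
        simp
      · simp
    obtain ⟨ε, hε, hball⟩ := Metric.isOpen_iff.mp hopen _ hmem
    set p : ℂ × ℂ := (((1 + ε/2 : ℝ) : ℂ) * Complex.I, -Complex.I) with hp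
    have hpball : p ∈ Metric.ball ((Complex.I, -Complex.I) : ℂ × ℂ) ε := by
      rw [Metric.mem_ball, Prod.dist_eq]
      apply max_lt
      · rw [Complex.dist_eq]
        have : ((1 + ε/2 : ℝ) : ℂ) * Complex.I - Complex.I = ((ε/2 : ℝ) : ℂ) * Complex.I := by
          push_cast; ring
        rw [this, norm_mul, Complex.norm_I, mul_one, Complex.norm_real, Real.norm_eq_abs,
          abs_of_pos (by linarith)]
        linarith
      · simpa [hp] using hε
    have habs1 : ‖(((1 + ε/2 : ℝ) : ℂ) * Complex.I)‖ = 1 + ε/2 := by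
      rw [norm_mul, Complex.norm_I, mul_one, Complex.norm_real, Real.norm_eq_abs, abs_of_pos (by linarith)]
    obtain ⟨c, hc1, hc2⟩ := hball hpball
    have htrop : tropAdd p.1 p.2 = {((1 + ε/2 : ℝ) : ℂ) * Complex.I} := by
      unfold tropAdd
      rw [if_pos]
      rw [hp]
      simp only []
      rw [habs1]
      simp
      linarith
    rw [htrop] at hc1
    rw [Set.mem_singleton_iff] at hc1
    subst hc1
    rw [Metric.mem_ball, Complex.dist_eq] at hc2
    have : (1:ℝ) ≤ ‖(((1 + ε/2 : ℝ) : ℂ) * Complex.I - 1)‖ := by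
      have hre : ((((1 + ε/2 : ℝ) : ℂ) * Complex.I - 1)).re = -1 := by simp
      calc (1:ℝ) = |(-1 : ℝ)| := by norm_num
        _ = |((((1 + ε/2 : ℝ) : ℂ) * Complex.I - 1)).re| := by rw [hre]
        _ ≤ _ := Complex.abs_re_le_norm _
    linarith
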